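/- Let X be a real normed space of dimension at least 2 and let (G,+) be an Abelian group. A mapping f : X → G satisfies: for all x,y ∈ X, x ⊥_{ρ*} y implies f(x+y) = f(x) + f(y), if and only if there exist an additive mapping A : X → G and a biadditive symmetric mapping B : X × X → G such that f(x) = A(x) + B(x,x) for all x ∈ X and B(x,y) = 0 whenever x ⊥_{ρ*} y. -/

import Mathlib

open Filter Topology Set

/-- The norm derivative `ρ₊(x,y) = lim_{t→0⁺} (‖x+ty‖² − ‖x‖²)/(2t)`. -/
noncomputable def rhoPlus {X : Type*} [NormedAddCommGroup X] [NormedSpace ℝ X] (x y : X) : ℝ :=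
  limUnder (𝓝[>] (0 : ℝ)) (fun t : ℝ => (‖x + t • y‖ ^ 2 - ‖x‖ ^ 2) / (2 * t))

/-- The norm derivative `ρ₋(x,y) = lim_{t→0⁻} (‖x+ty‖² − ‖x‖²)/(2t)`. -/
noncomputable def rhoMinus {X : Type*} [NormedAddCommGroup X] [NormedSpace ℝ X] (x y : X) : ℝ :=
  limUnder (𝓝[<] (0 : ℝ)) (fun t : ℝ => (‖x + t • y‖ ^ 2 - ‖x‖ ^ 2) / (2 * t))

/-- `ρ*(x,y) := ρ₋(x,y)·ρ₊(x,y)`. -/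
noncomputable def rhoStar {X : Type*} [NormedAddCommGroup X] [NormedSpace ℝ X] (x y : X) : ℝ :=
  rhoMinus x y * rhoPlus x y

namespace RhoAux

variable {X : Type*} [NormedAddCommGroup X] [NormedSpace ℝ X]

/-- The difference quotient. -/
noncomputable def qf (x y : X) (t : ℝ) : ℝ := (‖x + t • y‖ ^ 2 - ‖x‖ ^ 2) / (2 * t)

lemma convexF (x y : X) : ConvexOn ℝ univ (fun t : ℝ => ‖x + t • y‖ ^ 2) := by
  have h1 : ConvexOn ℝ univ (fun t : ℝ => ‖x + t • y‖) := by
    have h2 := (convexOn_univ_norm (E := X)).comp_affineMap (AffineMap.lineMap x (x + y))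
    have : (fun t : ℝ => ‖x + t • y‖) = (norm ∘ (AffineMap.lineMap x (x + y))) := by
      funext t
      simp [AffineMap.lineMap_apply, add_sub_cancel_left, add_comm]
    rw [this]
    simpa using h2
  have h3 := h1.pow (fun t _ => norm_nonneg _) 2
  have : (fun t : ℝ => ‖x + t • y‖ ^ 2) = ((fun t : ℝ => ‖x + t • y‖) ^ 2) := by
    funext t; simp
  rw [this]; exact h3

lemma qf_eq_slope (x y : X) (t : ℝ) :
    qf x y t = slope (fun t : ℝ => ‖x + t • y‖ ^ 2) 0 t / 2 := by
  rw [slope_def_field]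
  simp only [qf, zero_smul, add_zero, sub_zero]
  rw [div_div, mul_comm]

lemma qf_mono (x y : X) : MonotoneOn (qf x y) (univ \ {(0:ℝ)}) := by
  have h := (convexF x y).slope_mono (mem_univ (0:ℝ))
  intro a ha b hb hab
  rw [qf_eq_slope, qf_eq_slope]
  have := h (by simpa using ha.2) (by simpa using hb.2) hab
  linarith

lemma tendsto_rhoPlus (x y : X) : Tendsto (qf x y) (𝓝[>] (0:ℝ)) (𝓝 (rhoPlus x y)) := by
  have hmono : MonotoneOn (qf x y) (Ioi (0:ℝ)) :=
    (qf_mono x y).mono (fun t ht => ⟨mem_univ t, by simpa using ne_of_gt ht⟩)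
  have hbdd : BddBelow (qf x y '' Ioi (0:ℝ)) := by
    refine ⟨qf x y (-1), ?_⟩
    rintro _ ⟨t, ht, rfl⟩
    exact (qf_mono x y) ⟨mem_univ _, by norm_num⟩ ⟨mem_univ t, by simpa using ne_of_gt ht⟩
      (by linarith [mem_Ioi.1 ht])
  have key := hmono.tendsto_nhdsGT hbdd
  have h2 : rhoPlus x y = sInf (qf x y '' Ioi (0:ℝ)) := key.limUnder_eq
  rw [h2]; exact key

lemma rhoPlus_eq {x y : X} {L : ℝ} (h : Tendsto (qf x y) (𝓝[>] (0:ℝ)) (𝓝 L)) :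
    rhoPlus x y = L := tendsto_nhds_unique (tendsto_rhoPlus x y) h

lemma tendsto_neg_IioIoi : Tendsto (fun t : ℝ => -t) (𝓝[<] (0:ℝ)) (𝓝[>] (0:ℝ)) := by
  apply tendsto_nhdsWithin_of_tendsto_nhds_of_eventually_within
  · simpa using (continuous_neg.tendsto (0:ℝ)).mono_left nhdsWithin_le_nhds
  · filter_upwards [self_mem_nhdsWithin] with t ht
    exact mem_Ioi.2 (by simpa using mem_Iio.1 ht)

lemma qf_neg (x y : X) (t : ℝ) : qf x y t = - qf x (-y) (-t) := by
  simp only [qf, smul_neg, neg_smul, neg_neg, mul_neg, div_neg, neg_neg]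

lemma rhoMinus_eq_neg (x y : X) : rhoMinus x y = - rhoPlus x (-y) := by
  have h : Tendsto (qf x y) (𝓝[<] (0:ℝ)) (𝓝 (- rhoPlus x (-y))) := by
    have h2 := ((tendsto_rhoPlus x (-y)).comp tendsto_neg_IioIoi).neg
    exact h2.congr (fun t => (qf_neg x y t).symm)
  exact h.limUnder_eq

lemma tendsto_rhoMinus (x y : X) : Tendsto (qf x y) (𝓝[<] (0:ℝ)) (𝓝 (rhoMinus x y)) := by
  rw [rhoMinus_eq_neg]
  exact ((tendsto_rhoPlus x (-y)).comp tendsto_neg_IioIoi).neg.congr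
    (fun t => (qf_neg x y t).symm)

lemma rhoMinus_eq {x y : X} {L : ℝ} (h : Tendsto (qf x y) (𝓝[<] (0:ℝ)) (𝓝 L)) :
    rhoMinus x y = L := tendsto_nhds_unique (tendsto_rhoMinus x y) h

lemma rhoPlus_zero_right (x : X) : rhoPlus x 0 = 0 := by
  apply rhoPlus_eq
  have : qf x (0 : X) = fun _ : ℝ => (0:ℝ) := by
    funext t; simp [qf]
  rw [this]; exact tendsto_const_nhds

lemma rhoPlus_zero_left (y : X) : rhoPlus (0 : X) y = 0 := by
  apply rhoPlus_eq
  have h : Tendsto (fun t : ℝ => t * ‖y‖ ^ 2 / 2) (𝓝[>] (0:ℝ)) (𝓝 0) := by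
    have : Tendsto (fun t : ℝ => t * ‖y‖ ^ 2 / 2) (𝓝 (0:ℝ)) (𝓝 (0 * ‖y‖^2 / 2)) := by
      exact (tendsto_id.mul tendsto_const_nhds).div_const 2
    simpa using this.mono_left nhdsWithin_le_nhds
  apply h.congr' ?_
  filter_upwards [self_mem_nhdsWithin] with t ht
  have ht' : t ≠ 0 := ne_of_gt (mem_Ioi.1 ht)
  simp only [qf, zero_add, norm_zero, norm_smul, mul_pow, sq_abs]
  field_simp
  simp only [Real.norm_eq_abs, sq_abs]; ring

end RhoAux
namespace RhoAux

variable {X : Type*} [NormedAddCommGroup X] [NormedSpace ℝ X]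

lemma tendsto_posmul {c : ℝ} (hc : 0 < c) :
    Tendsto (fun t : ℝ => c * t) (𝓝[>] (0:ℝ)) (𝓝[>] (0:ℝ)) := by
  apply tendsto_nhdsWithin_of_tendsto_nhds_of_eventually_within
  · have : Tendsto (fun t : ℝ => c * t) (𝓝 (0:ℝ)) (𝓝 (c * 0)) :=
      (continuous_const.mul continuous_id).tendsto 0
    simpa using this.mono_left nhdsWithin_le_nhds
  · filter_upwards [self_mem_nhdsWithin] with t ht
    exact mem_Ioi.2 (mul_pos hc (mem_Ioi.1 ht))

lemma rhoPlus_smul_right (x y : X) {c : ℝ} (hc : 0 < c) :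
    rhoPlus x (c • y) = c * rhoPlus x y := by
  apply rhoPlus_eq
  have h := ((tendsto_rhoPlus x y).comp (tendsto_posmul hc)).const_mul c
  apply h.congr
  intro t
  simp only [Function.comp_apply, qf, smul_smul]
  rcases eq_or_ne t 0 with rfl | ht
  · simp
  · rw [mul_comm t c]
    field_simp

lemma tendsto_divc {c : ℝ} (hc : 0 < c) :
    Tendsto (fun t : ℝ => t / c) (𝓝[>] (0:ℝ)) (𝓝[>] (0:ℝ)) := by
  have := tendsto_posmul (show (0:ℝ) < c⁻¹ by positivity)
  exact this.congr (fun t => by rw [div_eq_inv_mul])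

lemma rhoPlus_smul_left (x y : X) {c : ℝ} (hc : 0 < c) :
    rhoPlus (c • x) y = c * rhoPlus x y := by
  apply rhoPlus_eq
  have h := ((tendsto_rhoPlus x y).comp (tendsto_divc hc)).const_mul c
  apply h.congr
  intro t
  simp only [Function.comp_apply, qf]
  have hxy : c • x + t • y = c • (x + (t / c) • y) := by
    rw [smul_add, smul_smul, mul_div_cancel₀ _ (ne_of_gt hc)]
  rw [hxy, norm_smul, norm_smul, Real.norm_eq_abs, abs_of_pos hc, mul_pow, mul_pow]
  rcases eq_or_ne t 0 with rfl | ht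
  · simp
  · field_simp

lemma rhoPlus_neg_left (x y : X) : rhoPlus (-x) y = rhoPlus x (-y) := by
  apply rhoPlus_eq
  apply (tendsto_rhoPlus x (-y)).congr
  intro t
  have h1 : ‖-x + t • y‖ = ‖x + t • (-y)‖ := by
    rw [show -x + t • y = -(x + t • (-y)) by module, norm_neg]
  simp only [qf, h1, norm_neg]

lemma rhoMinus_neg_left (x y : X) : rhoMinus (-x) y = rhoMinus x (-y) := by
  rw [rhoMinus_eq_neg, rhoMinus_eq_neg, rhoPlus_neg_left]

lemma rhoPlus_add_smul (x y : X) (s : ℝ) :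
    rhoPlus x (y + s • x) = rhoPlus x y + s * ‖x‖ ^ 2 := by
  apply rhoPlus_eq
  have hev : ∀ᶠ t in 𝓝[>] (0:ℝ), 0 < 1 + t * s := by
    have h : Tendsto (fun t : ℝ => 1 + t * s) (𝓝[>] (0:ℝ)) (𝓝 1) := by
      have : Tendsto (fun t : ℝ => 1 + t * s) (𝓝 (0:ℝ)) (𝓝 (1 + 0 * s)) := by
        exact tendsto_const_nhds.add (tendsto_id.mul tendsto_const_nhds)
      simpa using this.mono_left nhdsWithin_le_nhds
    exact h.eventually (eventually_gt_nhds one_pos)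
  have hτ : Tendsto (fun t : ℝ => t / (1 + t * s)) (𝓝[>] (0:ℝ)) (𝓝[>] (0:ℝ)) := by
    apply tendsto_nhdsWithin_of_tendsto_nhds_of_eventually_within
    · have hc : ContinuousAt (fun t : ℝ => t / (1 + t * s)) 0 := by
        apply ContinuousAt.div continuousAt_id (by fun_prop)
        norm_num
      have := hc.tendsto.mono_left (nhdsWithin_le_nhds (s := Ioi (0:ℝ)))
      simpa using this
    · filter_upwards [hev, self_mem_nhdsWithin] with t h1 h2
      exact mem_Ioi.2 (div_pos (mem_Ioi.1 h2) h1)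
  have main : Tendsto
      (fun t : ℝ => (1 + t * s) * qf x y (t / (1 + t * s)) + (s + t * s ^ 2 / 2) * ‖x‖ ^ 2)
      (𝓝[>] (0:ℝ)) (𝓝 (rhoPlus x y + s * ‖x‖ ^ 2)) := by
    have A : Tendsto (fun t : ℝ => 1 + t * s) (𝓝[>] (0:ℝ)) (𝓝 1) := by
      have : Tendsto (fun t : ℝ => 1 + t * s) (𝓝 (0:ℝ)) (𝓝 (1 + 0 * s)) :=
        tendsto_const_nhds.add (tendsto_id.mul tendsto_const_nhds)
      simpa using this.mono_left nhdsWithin_le_nhds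
    have B := (tendsto_rhoPlus x y).comp hτ
    have C : Tendsto (fun t : ℝ => (s + t * s ^ 2 / 2) * ‖x‖ ^ 2) (𝓝[>] (0:ℝ))
        (𝓝 (s * ‖x‖ ^ 2)) := by
      have : Tendsto (fun t : ℝ => (s + t * s ^ 2 / 2) * ‖x‖ ^ 2) (𝓝 (0:ℝ))
          (𝓝 ((s + 0 * s ^ 2 / 2) * ‖x‖ ^ 2)) :=
        (tendsto_const_nhds.add ((tendsto_id.mul tendsto_const_nhds).div_const 2)).mul
          tendsto_const_nhds
      simpa using this.mono_left nhdsWithin_le_nhds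
    simpa using (A.mul B).add C
  apply main.congr' ?_
  filter_upwards [hev, self_mem_nhdsWithin] with t hpos ht
  have ht0 : (0:ℝ) < t := mem_Ioi.1 ht
  have hmul : (1 + t * s) * (t / (1 + t * s)) = t := by field_simp
  have hkey : x + t • (y + s • x) = (1 + t * s) • (x + (t / (1 + t * s)) • y) := by
    rw [show (1 + t * s) • (x + (t / (1 + t * s)) • y)
        = (1 + t * s) • x + ((1 + t * s) * (t / (1 + t * s))) • y by module, hmul]
    module
  rw [qf, qf, hkey, norm_smul, Real.norm_eq_abs, abs_of_pos hpos, mul_pow]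
  field_simp
  ring

lemma rhoPlus_smul_self (x : X) (s : ℝ) : rhoPlus x (s • x) = s * ‖x‖ ^ 2 := by
  have := rhoPlus_add_smul x 0 s
  rw [zero_add, rhoPlus_zero_right, zero_add] at this
  exact this

lemma rhoMinus_add_smul (x y : X) (s : ℝ) :
    rhoMinus x (y + s • x) = rhoMinus x y + s * ‖x‖ ^ 2 := by
  rw [rhoMinus_eq_neg, rhoMinus_eq_neg, neg_add, ← neg_smul,
    rhoPlus_add_smul x (-y) (-s), neg_add]
  ring

lemma rhoMinus_smul_right (x y : X) {c : ℝ} (hc : 0 < c) :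
    rhoMinus x (c • y) = c * rhoMinus x y := by
  rw [rhoMinus_eq_neg, rhoMinus_eq_neg, ← smul_neg, rhoPlus_smul_right x (-y) hc]
  ring

lemma rhoMinus_smul_left (x y : X) {c : ℝ} (hc : 0 < c) :
    rhoMinus (c • x) y = c * rhoMinus x y := by
  rw [rhoMinus_eq_neg, rhoMinus_eq_neg, rhoPlus_smul_left x (-y) hc]
  ring

lemma rhoMinus_zero_right (x : X) : rhoMinus x 0 = 0 := by
  rw [rhoMinus_eq_neg, neg_zero, rhoPlus_zero_right, neg_zero]

lemma rhoMinus_zero_left (y : X) : rhoMinus (0:X) y = 0 := by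
  rw [rhoMinus_eq_neg, rhoPlus_zero_left, neg_zero]

lemma rhoMinus_smul_self (x : X) (s : ℝ) : rhoMinus x (s • x) = s * ‖x‖ ^ 2 := by
  have := rhoMinus_add_smul x 0 s
  rw [zero_add, rhoMinus_zero_right, zero_add] at this
  exact this

lemma rhoPlus_smul_right_neg (x y : X) {c : ℝ} (hc : c < 0) :
    rhoPlus x (c • y) = c * rhoMinus x y := by
  have h1 : c • y = (-c) • (-y) := by rw [neg_smul, smul_neg, neg_neg]
  rw [h1, rhoPlus_smul_right x (-y) (by linarith), rhoMinus_eq_neg]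
  ring

lemma rhoPlus_smul_left_neg (x y : X) {c : ℝ} (hc : c < 0) :
    rhoPlus (c • x) y = c * rhoMinus x y := by
  have h1 : c • x = (-c) • (-x) := by rw [neg_smul, smul_neg, neg_neg]
  rw [h1, rhoPlus_smul_left (-x) y (by linarith), rhoPlus_neg_left, rhoMinus_eq_neg]
  ring

lemma rhoMinus_smul_right_neg (x y : X) {c : ℝ} (hc : c < 0) :
    rhoMinus x (c • y) = c * rhoPlus x y := by
  rw [rhoMinus_eq_neg, ← smul_neg, rhoPlus_smul_right_neg x (-y) hc, rhoMinus_eq_neg, neg_neg]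
  ring

lemma rhoMinus_smul_left_neg (x y : X) {c : ℝ} (hc : c < 0) :
    rhoMinus (c • x) y = c * rhoPlus x y := by
  rw [rhoMinus_eq_neg, rhoPlus_smul_left_neg x (-y) hc, rhoMinus_eq_neg, neg_neg]
  ring

lemma rhoStar_smul_left (x y : X) (c : ℝ) : rhoStar (c • x) y = c ^ 2 * rhoStar x y := by
  rcases lt_trichotomy c 0 with hc | rfl | hc
  · rw [rhoStar, rhoStar, rhoPlus_smul_left_neg x y hc, rhoMinus_smul_left_neg x y hc]
    ring
  · rw [zero_smul, rhoStar, rhoMinus_zero_left, rhoPlus_zero_left]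
    ring
  · rw [rhoStar, rhoStar, rhoPlus_smul_left x y hc, rhoMinus_smul_left x y hc]
    ring

lemma rhoStar_smul_right (x y : X) (c : ℝ) : rhoStar x (c • y) = c ^ 2 * rhoStar x y := by
  rcases lt_trichotomy c 0 with hc | rfl | hc
  · rw [rhoStar, rhoStar, rhoPlus_smul_right_neg x y hc, rhoMinus_smul_right_neg x y hc]
    ring
  · rw [zero_smul, rhoStar, rhoMinus_zero_right, rhoPlus_zero_right]
    ring
  · rw [rhoStar, rhoStar, rhoPlus_smul_right x y hc, rhoMinus_smul_right x y hc]
    ring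

lemma rhoMinus_le_rhoPlus (x y : X) : rhoMinus x y ≤ rhoPlus x y := by
  have step : ∀ u : ℝ, 0 < u → rhoMinus x y ≤ qf x y u := by
    intro u hu
    apply le_of_tendsto (tendsto_rhoMinus x y)
    filter_upwards [self_mem_nhdsWithin] with t ht
    exact (qf_mono x y) ⟨mem_univ t, by simpa using ne_of_lt (mem_Iio.1 ht)⟩
      ⟨mem_univ u, by simpa using ne_of_gt hu⟩ (by linarith [mem_Iio.1 ht])
  apply ge_of_tendsto (tendsto_rhoPlus x y)
  filter_upwards [self_mem_nhdsWithin] with u hu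
  exact step u (mem_Ioi.1 hu)

lemma rhoMinus_lower (x y : X) : (‖x‖ ^ 2 - ‖x - y‖ ^ 2) / 2 ≤ rhoMinus x y := by
  apply ge_of_tendsto (tendsto_rhoMinus x y)
  filter_upwards [Ioo_mem_nhdsLT (show (-1:ℝ) < 0 by norm_num)] with t ht
  have h := (qf_mono x y) ⟨mem_univ (-1:ℝ), by norm_num⟩
    ⟨mem_univ t, by simpa using ne_of_lt ht.2⟩ (le_of_lt ht.1)
  refine le_trans (le_of_eq ?_) h
  rw [qf]
  rw [show x + (-1 : ℝ) • y = x - y by module]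
  ring

lemma rhoPlus_subadd (x y z : X) : rhoPlus x (y + z) ≤ rhoPlus x y + rhoPlus x z := by
  have hR : Tendsto (fun t : ℝ => qf x y (2 * t) + qf x z (2 * t)) (𝓝[>] (0:ℝ))
      (𝓝 (rhoPlus x y + rhoPlus x z)) :=
    ((tendsto_rhoPlus x y).comp (tendsto_posmul two_pos)).add
      ((tendsto_rhoPlus x z).comp (tendsto_posmul two_pos))
  apply le_of_tendsto_of_tendsto (tendsto_rhoPlus x (y + z)) hR
  filter_upwards [self_mem_nhdsWithin] with t ht
  have ht0 : (0:ℝ) < t := mem_Ioi.1 ht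
  have hdecomp : x + t • (y + z) = (1/2 : ℝ) • (x + (2*t) • y) + (1/2 : ℝ) • (x + (2*t) • z) := by
    module
  have htri : ‖x + t • (y + z)‖ ≤ (‖x + (2*t) • y‖ + ‖x + (2*t) • z‖) / 2 := by
    rw [hdecomp]
    refine le_trans (norm_add_le _ _) ?_
    rw [norm_smul, norm_smul]
    simp [abs_of_pos]
    ring_nf
    norm_num [add_comm]
  have hsq : ‖x + t • (y + z)‖ ^ 2 ≤ (‖x + (2*t) • y‖ ^ 2 + ‖x + (2*t) • z‖ ^ 2) / 2 := by
    nlinarith [norm_nonneg (x + t • (y + z)), norm_nonneg (x + (2*t) • y),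
      norm_nonneg (x + (2*t) • z), sq_nonneg (‖x + (2*t) • y‖ - ‖x + (2*t) • z‖)]
  simp only [qf]
  rw [← add_div, ← sub_add_sub_cancel _ (‖x‖^2) _]
  rw [div_le_div_iff₀ (by linarith) (by linarith)]
  nlinarith [hsq]

lemma rhoMinus_superadd (x y z : X) :
    rhoMinus x y + rhoMinus x z ≤ rhoMinus x (y + z) := by
  have h := rhoPlus_subadd x (-y) (-z)
  rw [rhoMinus_eq_neg, rhoMinus_eq_neg, rhoMinus_eq_neg, show -(y+z) = -y + -z by abel]
  linarith

end RhoAux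
namespace RhoAux

variable {X : Type*} [NormedAddCommGroup X] [NormedSpace ℝ X]
variable {G : Type*} [AddCommGroup G]

lemma rhoStar_smul_smul {x y : X} (h : rhoStar x y = 0) (a b : ℝ) :
    rhoStar (a • x) (b • y) = 0 := by
  rw [rhoStar_smul_left, rhoStar_smul_right, h]; ring

lemma rhoStar_of_rhoPlus {x y : X} (h : rhoPlus x y = 0) : rhoStar x y = 0 := by
  rw [rhoStar, h, mul_zero]

lemma rhoStar_of_rhoMinus {x y : X} (h : rhoMinus x y = 0) : rhoStar x y = 0 := by
  rw [rhoStar, h, zero_mul]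

/-- The second difference of `f`. -/
def Df (f : X → G) (x y : X) : G := f (x + y) - f x - f y

variable {f : X → G}

lemma f_zero (hf : ∀ x y : X, rhoStar x y = 0 → f (x + y) = f x + f y) : f 0 = 0 := by
  have h := hf 0 0 (by rw [rhoStar, rhoPlus_zero_left, mul_zero])
  rw [add_zero] at h
  exact (left_eq_add.1 h)

lemma Df_symm (x y : X) : Df f x y = Df f y x := by
  unfold Df; rw [add_comm y x]; abel

section WithHf

variable (hf : ∀ x y : X, rhoStar x y = 0 → f (x + y) = f x + f y)

include hf

set_option linter.unusedSectionVars false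

lemma Df_zero_right (x : X) : Df f x 0 = 0 := by
  simp [Df, f_zero hf]

lemma Df_zero_left (y : X) : Df f 0 y = 0 := by
  simp [Df, f_zero hf]

lemma split_of_rhoPlus {x w : X} (h : rhoPlus x w = 0) (a b : ℝ) :
    f (a • x + b • w) = f (a • x) + f (b • w) :=
  hf _ _ (rhoStar_smul_smul (rhoStar_of_rhoPlus h) a b)

lemma redPlus {x : X} (hx : x ≠ 0) (y : X) :
    Df f x y = Df f x ((rhoPlus x y / ‖x‖ ^ 2) • x) := by
  have hN0 : ‖x‖ ^ 2 ≠ 0 := pow_ne_zero _ (norm_ne_zero_iff.2 hx)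
  set r := rhoPlus x y / ‖x‖ ^ 2 with hr
  set w := y - r • x with hw
  have hρ : rhoPlus x w = 0 := by
    have h1 : w = y + (-r) • x := by rw [hw]; module
    rw [h1, rhoPlus_add_smul, hr]
    field_simp
    ring
  have hsw : ∀ c : ℝ, rhoStar (c • x) w = 0 := by
    intro c
    have := rhoStar_smul_smul (rhoStar_of_rhoPlus hρ) c 1
    simpa using this
  have h1 : f (x + y) = f ((1 + r) • x) + f w := by
    rw [show x + y = (1 + r) • x + w by rw [hw]; module]
    exact hf _ _ (hsw (1 + r))
  have h2 : f y = f (r • x) + f w := by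
    rw [show y = r • x + w by rw [hw]; module]
    exact hf _ _ (hsw r)
  unfold Df
  rw [h1, h2, show x + r • x = (1 + r) • x by module]
  abel

lemma redMinus {x : X} (hx : x ≠ 0) (y : X) :
    Df f x y = Df f x ((rhoMinus x y / ‖x‖ ^ 2) • x) := by
  have hN0 : ‖x‖ ^ 2 ≠ 0 := pow_ne_zero _ (norm_ne_zero_iff.2 hx)
  set r := rhoMinus x y / ‖x‖ ^ 2 with hr
  set w := y - r • x with hw
  have hρ : rhoMinus x w = 0 := by
    have h1 : w = y + (-r) • x := by rw [hw]; module
    rw [h1, rhoMinus_add_smul, hr]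
    field_simp
    ring
  have hsw : ∀ c : ℝ, rhoStar (c • x) w = 0 := by
    intro c
    have := rhoStar_smul_smul (rhoStar_of_rhoMinus hρ) c 1
    simpa using this
  have h1 : f (x + y) = f ((1 + r) • x) + f w := by
    rw [show x + y = (1 + r) • x + w by rw [hw]; module]
    exact hf _ _ (hsw (1 + r))
  have h2 : f y = f (r • x) + f w := by
    rw [show y = r • x + w by rw [hw]; module]
    exact hf _ _ (hsw r)
  unfold Df
  rw [h1, h2, show x + r • x = (1 + r) • x by module]
  abel

lemma D_zero_of_nonsmooth {x : X} (hx : x ≠ 0) {v : X}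
    (hv : rhoMinus x v ≠ rhoPlus x v) : ∀ y : X, Df f x y = 0 := by
  have hN : (0:ℝ) < ‖x‖ ^ 2 := by
    have := norm_pos_iff.2 hx
    positivity
  set N := ‖x‖ ^ 2 with hNdef
  have hN0 : N ≠ 0 := ne_of_gt hN
  set α := rhoMinus x v with hα
  set β := rhoPlus x v with hβ
  have hαβ : α < β := lt_of_le_of_ne (rhoMinus_le_rhoPlus x v) hv
  have step : ∀ a b : ℝ, a < b → Df f x (a • x) = Df f x (b • x) := by
    intro a b hab
    set s := (b * N - a * N) / (β - α) with hs
    have hs0 : 0 < s := by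
      apply div_pos
      · nlinarith
      · linarith
    set t := (a * N - s * α) / N with ht
    set u := s • v + t • x with hu
    have hβα : β - α ≠ 0 := ne_of_gt (by linarith)
    have hsb : s * (β - α) = b * N - a * N := by rw [hs]; field_simp
    have htN : t * N = a * N - s * α := by rw [ht]; field_simp
    have hPu : rhoPlus x u = b * N := by
      rw [hu, rhoPlus_add_smul, rhoPlus_smul_right x v hs0, ← hβ, ← hNdef]
      linear_combination hsb + htN
    have hMu : rhoMinus x u = a * N := by
      rw [hu, rhoMinus_add_smul, rhoMinus_smul_right x v hs0, ← hα, ← hNdef]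
      linear_combination htN
    have e1 := redPlus hf hx u
    have e2 := redMinus hf hx u
    rw [hPu, mul_div_assoc, div_self hN0, mul_one] at e1
    rw [hMu, mul_div_assoc, div_self hN0, mul_one] at e2
    rw [← e2, e1]
  have key : ∀ r : ℝ, Df f x (r • x) = 0 := by
    have h0 : Df f x ((0:ℝ) • x) = 0 := by
      rw [zero_smul]; exact Df_zero_right hf x
    intro r
    rcases lt_trichotomy r 0 with h | h | h
    · rw [step r 0 h, h0]
    · rw [h, h0]
    · rw [← step 0 r h, h0]
  intro y
  rw [redPlus hf hx y]
  exact key _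

end WithHf

lemma rho_add_of_smooth {x : X} (hsm : ∀ v, rhoMinus x v = rhoPlus x v) (y z : X) :
    rhoPlus x (y + z) = rhoPlus x y + rhoPlus x z := by
  refine le_antisymm (rhoPlus_subadd x y z) ?_
  have h := rhoMinus_superadd x y z
  rw [hsm, hsm, hsm] at h
  exact h

lemma rho_smul_of_smooth {x : X} (hsm : ∀ v, rhoMinus x v = rhoPlus x v) (c : ℝ) (y : X) :
    rhoPlus x (c • y) = c * rhoPlus x y := by
  rcases lt_trichotomy c 0 with h | rfl | h
  · rw [rhoPlus_smul_right_neg x y h, hsm]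
  · rw [zero_smul, rhoPlus_zero_right, zero_mul]
  · exact rhoPlus_smul_right x y h

end RhoAux
namespace RhoAux

variable {X : Type*} [NormedAddCommGroup X] [NormedSpace ℝ X]
variable {G : Type*} [AddCommGroup G]
variable {f : X → G}

section Main

variable (hf : ∀ x y : X, rhoStar x y = 0 → f (x + y) = f x + f y)

include hf

set_option linter.unusedSectionVars false
set_option maxHeartbeats 1000000

lemma D_add_right (hdim : 2 ≤ Module.rank ℝ X) (x : X) :
    ∀ y z : X, Df f x (y + z) = Df f x y + Df f x z := by
  rcases eq_or_ne x 0 with rfl | hx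
  · intro y z; simp [Df_zero_left hf]
  by_cases hsm : ∀ v, rhoMinus x v = rhoPlus x v
  swap
  · push_neg at hsm
    obtain ⟨v, hv⟩ := hsm
    intro y z
    simp [D_zero_of_nonsmooth hf hx hv]
  -- smooth case
  have hxpos : 0 < ‖x‖ := norm_pos_iff.2 hx
  have hN0 : (‖x‖:ℝ) ^ 2 ≠ 0 := pow_ne_zero _ (ne_of_gt hxpos)
  suffices hφ : ∀ r s : ℝ, Df f x ((r + s) • x) = Df f x (r • x) + Df f x (s • x) by
    intro y z
    rw [redPlus hf hx (y + z), redPlus hf hx y, redPlus hf hx z,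
      rho_add_of_smooth hsm y z, add_div, hφ]
  -- construct w : a nonzero vector with rhoPlus x w = 0 and ‖w‖ = 3‖x‖
  obtain ⟨y₁, hy₁⟩ : ∃ y₁ : X, y₁ ∉ Submodule.span ℝ {x} := by
    by_contra hcon
    push_neg at hcon
    have h2 := rank_span_le (R := ℝ) (M := X) ({x} : Set X)
    rw [Cardinal.mk_singleton] at h2
    have h3 : Submodule.span ℝ ({x} : Set X) = ⊤ := by
      rw [eq_top_iff]; intro z _; exact hcon z
    rw [h3] at h2
    rw [rank_top] at h2
    have := hdim.trans h2
    norm_num at this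
  obtain ⟨w, hnw, hxw⟩ : ∃ w : X, ‖w‖ = 3 * ‖x‖ ∧ rhoPlus x w = 0 := by
    set w₀ := y₁ - (rhoPlus x y₁ / ‖x‖ ^ 2) • x with hw₀def
    have hw₀0 : w₀ ≠ 0 := by
      intro h
      apply hy₁
      have h1 : y₁ = (rhoPlus x y₁ / ‖x‖ ^ 2) • x := by
        have := sub_eq_zero.1 h
        exact this
      rw [h1]
      exact Submodule.smul_mem _ _ (Submodule.mem_span_singleton_self x)
    have hxw₀ : rhoPlus x w₀ = 0 := by
      rw [hw₀def, show y₁ - (rhoPlus x y₁ / ‖x‖ ^ 2) • x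
          = y₁ + (-(rhoPlus x y₁ / ‖x‖ ^ 2)) • x by module, rhoPlus_add_smul]
      field_simp
      ring
    have hc0 : 0 < 3 * ‖x‖ / ‖w₀‖ := by
      have := norm_pos_iff.2 hw₀0
      positivity
    refine ⟨(3 * ‖x‖ / ‖w₀‖) • w₀, ?_, ?_⟩
    · rw [norm_smul, Real.norm_eq_abs, abs_of_pos hc0,
        div_mul_cancel₀ _ (norm_ne_zero_iff.2 hw₀0)]
    · rw [rhoPlus_smul_right x w₀ hc0, hxw₀, mul_zero]
  have hw0 : w ≠ 0 := by
    intro h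
    rw [h, norm_zero] at hnw
    linarith
  have hsplit := split_of_rhoPlus hf hxw
  have hplane : ∀ aa bb a b : ℝ,
      Df f (aa • x + bb • w) (a • x + b • w)
        = Df f (aa • x) (a • x) + Df f (bb • w) (b • w) := by
    intro aa bb a b
    unfold Df
    rw [show aa • x + bb • w + (a • x + b • w) = (aa + a) • x + (bb + b) • w by module,
      hsplit (aa + a) (bb + b), hsplit aa bb, hsplit a b,
      show aa • x + a • x = (aa + a) • x by module,
      show bb • w + b • w = (bb + b) • w by module]
    abel
  have hφ0 : (∀ r : ℝ, Df f x (r • x) = 0) →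
      ∀ r s : ℝ, Df f x ((r + s) • x) = Df f x (r • x) + Df f x (s • x) := by
    intro h r s
    rw [h, h, h, add_zero]
  -- If the functions b ↦ Df f (β•w) (b•w) all vanish, then r ↦ Df f x (r•x) vanishes.
  have hHG : (∀ β b : ℝ, β ≠ 0 → Df f (β • w) (b • w) = 0) →
      ∀ r : ℝ, Df f x (r • x) = 0 := by
    intro HΓ r
    set u := x + w with hu
    have hnu : 2 * ‖x‖ ≤ ‖u‖ := by
      have h1 : ‖w‖ ≤ ‖u‖ + ‖x‖ := by
        rw [show w = u - x by rw [hu]; abel]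
        exact norm_sub_le _ _
      linarith
    have hu0 : u ≠ 0 := by
      intro h
      rw [h, norm_zero] at hnu
      linarith
    have hm : 0 < rhoMinus u w := by
      have hlow := rhoMinus_lower u w
      rw [show u - w = x by rw [hu]; abel] at hlow
      nlinarith
    have hp : 0 < rhoPlus u w := lt_of_lt_of_le hm (rhoMinus_le_rhoPlus u w)
    have hupos : 0 < ‖u‖ := norm_pos_iff.2 hu0
    have hU0 : ‖u‖ ^ 2 ≠ 0 := pow_ne_zero _ (ne_of_gt hupos)
    have hDub : ∀ b : ℝ, Df f u (b • w) = 0 := by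
      intro b
      have h1 := hplane 1 1 0 b
      simp only [zero_smul, one_smul, zero_add] at h1
      rw [Df_zero_right hf, zero_add] at h1
      have h2 := HΓ 1 b one_ne_zero
      rw [one_smul] at h2
      rw [hu, h1, h2]
    have hpsi : ∀ c : ℝ, Df f u (c • u) = Df f x (c • x) := by
      intro c
      have h1 := hplane 1 1 c c
      simp only [one_smul] at h1
      rw [show c • x + c • w = c • u by rw [hu]; module] at h1
      have h2 := HΓ 1 c one_ne_zero
      rw [one_smul] at h2
      rw [hu, h1, h2, add_zero]
    rcases lt_trichotomy r 0 with hr | rfl | hr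
    · set b := r * ‖u‖ ^ 2 / rhoMinus u w with hb
      have hbneg : b < 0 :=
        div_neg_of_neg_of_pos (mul_neg_of_neg_of_pos hr (pow_pos hupos 2)) hm
      have hρb : rhoPlus u (b • w) = r * ‖u‖ ^ 2 := by
        rw [rhoPlus_smul_right_neg u w hbneg, hb]
        field_simp
      have hred := redPlus hf hu0 (b • w)
      rw [hρb, mul_div_assoc, div_self hU0, mul_one] at hred
      rw [← hpsi r, ← hred, hDub b]
    · rw [zero_smul, Df_zero_right hf]
    · set b := r * ‖u‖ ^ 2 / rhoPlus u w with hb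
      have hbpos : 0 < b := div_pos (mul_pos hr (pow_pos hupos 2)) hp
      have hρb : rhoPlus u (b • w) = r * ‖u‖ ^ 2 := by
        rw [rhoPlus_smul_right u w hbpos, hb]
        field_simp
      have hred := redPlus hf hu0 (b • w)
      rw [hρb, mul_div_assoc, div_self hU0, mul_one] at hred
      rw [← hpsi r, ← hred, hDub b]
  by_cases hwsm : ∀ v, rhoMinus w v = rhoPlus w v
  swap
  · -- w is a nonsmooth point
    push_neg at hwsm
    obtain ⟨v, hv⟩ := hwsm
    apply hφ0
    apply hHG
    intro β b hβ
    have hβw : β • w ≠ 0 := smul_ne_zero hβ hw0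
    have hv' : rhoMinus (β • w) v ≠ rhoPlus (β • w) v := by
      rcases lt_or_gt_of_ne hβ with h | h
      · rw [rhoMinus_smul_left_neg w v h, rhoPlus_smul_left_neg w v h]
        intro hcon
        exact hv (mul_left_cancel₀ hβ hcon).symm
      · rw [rhoMinus_smul_left w v h, rhoPlus_smul_left w v h]
        intro hcon
        exact hv (mul_left_cancel₀ hβ hcon)
    exact D_zero_of_nonsmooth hf hβw hv' (b • w)
  -- w smooth
  have hwpos : 0 < ‖w‖ := norm_pos_iff.2 hw0
  have hM0 : ‖w‖ ^ 2 ≠ 0 := pow_ne_zero _ (ne_of_gt hwpos)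
  by_cases hκ : rhoPlus w x = 0
  swap
  · -- rhoPlus w x ≠ 0 : again all Γ_h vanish
    apply hφ0
    apply hHG
    intro β b hβ
    have hβw : β • w ≠ 0 := smul_ne_zero hβ hw0
    have hWnorm : ‖β • w‖ ^ 2 = β ^ 2 * ‖w‖ ^ 2 := by
      rw [norm_smul, Real.norm_eq_abs, mul_pow, sq_abs]
    have hρβa : ∀ a : ℝ, rhoPlus (β • w) (a • x) = β * (a * rhoPlus w x) := by
      intro a
      rcases lt_or_gt_of_ne hβ with h | h
      · rw [rhoPlus_smul_left_neg w (a • x) h, hwsm, rho_smul_of_smooth hwsm a x]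
      · rw [rhoPlus_smul_left w (a • x) h, rho_smul_of_smooth hwsm a x]
    have hkey : ∀ a b' : ℝ, Df f (β • w) (b' • w)
        = Df f (β • w) ((a * rhoPlus w x / ‖w‖ ^ 2 + b') • w) := by
      intro a b'
      have hLHS : Df f (β • w) (a • x + b' • w) = Df f (β • w) (b' • w) := by
        have h1 := hplane 0 β a b'
        simp only [zero_smul, zero_add] at h1
        rw [Df_zero_left hf, zero_add] at h1
        exact h1
      have hsm2 : (b' / β) • (β • w) = b' • w := by
        rw [smul_smul, div_mul_cancel₀ _ hβ]
      have hρ : rhoPlus (β • w) (a • x + b' • w)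
          = β * (a * rhoPlus w x) + (b' / β) * ‖β • w‖ ^ 2 := by
        conv_lhs => rw [show a • x + b' • w = a • x + (b' / β) • (β • w) by rw [hsm2]]
        rw [rhoPlus_add_smul, hρβa]
      have hred := redPlus hf hβw (a • x + b' • w)
      rw [hρ, hWnorm, smul_smul] at hred
      have harg : (β * (a * rhoPlus w x) + b' / β * (β ^ 2 * ‖w‖ ^ 2)) / (β ^ 2 * ‖w‖ ^ 2) * β
          = a * rhoPlus w x / ‖w‖ ^ 2 + b' := by
        field_simp
      rw [harg] at hred
      rw [← hLHS, hred]
    have h0 := hkey (b * ‖w‖ ^ 2 / rhoPlus w x) 0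
    rw [zero_smul, Df_zero_right hf] at h0
    have harg2 : b * ‖w‖ ^ 2 / rhoPlus w x * rhoPlus w x / ‖w‖ ^ 2 + 0 = b := by
      field_simp
      ring
    rw [harg2] at h0
    exact h0.symm
  · -- rhoPlus w x = 0 : symmetric orthogonal smooth pair; use u = x + 3w
    set u := x + (3:ℝ) • w with hu
    have hnu : 8 * ‖x‖ ≤ ‖u‖ := by
      have h1 : ‖(3:ℝ) • w‖ ≤ ‖u‖ + ‖x‖ := by
        rw [show (3:ℝ) • w = u - x by rw [hu]; abel]
        exact norm_sub_le _ _
      rw [norm_smul, Real.norm_eq_abs] at h1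
      rw [hnw] at h1
      have : |(3:ℝ)| = 3 := by norm_num
      rw [this] at h1
      linarith
    have hu0 : u ≠ 0 := by
      intro h
      rw [h, norm_zero] at hnu
      linarith
    have hupos : 0 < ‖u‖ := norm_pos_iff.2 hu0
    have hU0 : ‖u‖ ^ 2 ≠ 0 := pow_ne_zero _ (ne_of_gt hupos)
    have hm : 0 < rhoMinus u w := by
      have hlow := rhoMinus_lower u w
      have huw : u - w = x + (2:ℝ) • w := by rw [hu]; module
      rw [huw] at hlow
      have hb : ‖x + (2:ℝ) • w‖ ≤ 7 * ‖x‖ := by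
        refine le_trans (norm_add_le _ _) ?_
        rw [norm_smul, Real.norm_eq_abs, hnw]
        rw [show |(2:ℝ)| = 2 by norm_num]
        linarith
      have h1 : ‖x + (2:ℝ) • w‖ ^ 2 ≤ (7 * ‖x‖) ^ 2 :=
        pow_le_pow_left₀ (norm_nonneg _) hb 2
      have h2 : (8 * ‖x‖) ^ 2 ≤ ‖u‖ ^ 2 := pow_le_pow_left₀ (by positivity) hnu 2
      nlinarith [h1, h2, hxpos, hlow]
    have hp : 0 < rhoPlus u w := lt_of_lt_of_le hm (rhoMinus_le_rhoPlus u w)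
    -- φ(a) = Df f u (a • x)
    have hphiu : ∀ a : ℝ, Df f u (a • x) = Df f x (a • x) := by
      intro a
      have h1 := hplane 1 3 a 0
      simp only [one_smul, zero_smul, add_zero] at h1
      rw [Df_zero_right hf, add_zero] at h1
      rw [hu]
      exact h1
    by_cases husm : ∀ v, rhoMinus u v = rhoPlus u v
    swap
    · -- u nonsmooth : Df f u ≡ 0 hence φ ≡ 0
      push_neg at husm
      obtain ⟨v, hv⟩ := husm
      apply hφ0
      intro r
      rw [← hphiu r]
      exact D_zero_of_nonsmooth hf hu0 hv (r • x)
    -- u smooth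
    by_cases hq : rhoPlus u x = 0
    · apply hφ0
      intro r
      rw [← hphiu r, redPlus hf hu0 (r • x), rho_smul_of_smooth husm r x, hq, mul_zero,
        zero_div, zero_smul, Df_zero_right hf]
    · -- the generic case : S is additive
      have hE1 : ∀ a b : ℝ, Df f u (a • x + b • w)
          = Df f x (a • x) + Df f ((3:ℝ) • w) (b • w) := by
        intro a b
        have h1 := hplane 1 3 a b
        simp only [one_smul] at h1
        rw [hu]
        exact h1
      have hredE : ∀ a b : ℝ, Df f u (a • x + b • w)
          = Df f u (((a * rhoPlus u x + b * rhoPlus u w) / ‖u‖ ^ 2) • u) := by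
        intro a b
        have h1 := redPlus hf hu0 (a • x + b • w)
        rw [rho_add_of_smooth husm, rho_smul_of_smooth husm a x,
          rho_smul_of_smooth husm b w] at h1
        exact h1
      have hE2 : ∀ a : ℝ, Df f x (a • x)
          = Df f u ((a * rhoPlus u x / ‖u‖ ^ 2) • u) := by
        intro a
        have h1 := hE1 a 0
        have h2 := hredE a 0
        simp only [zero_smul, add_zero] at h1
        rw [Df_zero_right hf, add_zero] at h1
        simp only [zero_smul, add_zero, zero_mul] at h2
        rw [← h1]
        exact h2
      have hE3 : ∀ b : ℝ, Df f ((3:ℝ) • w) (b • w)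
          = Df f u ((b * rhoPlus u w / ‖u‖ ^ 2) • u) := by
        intro b
        have h1 := hE1 0 b
        have h2 := hredE 0 b
        simp only [zero_smul, zero_add] at h1
        rw [Df_zero_right hf, zero_add] at h1
        simp only [zero_smul, zero_add, zero_mul] at h2
        rw [← h1]
        exact h2
      have hE4 : ∀ c d : ℝ, Df f u ((c + d) • u) = Df f u (c • u) + Df f u (d • u) := by
        intro c d
        set a := c * ‖u‖ ^ 2 / rhoPlus u x with ha
        set b := d * ‖u‖ ^ 2 / rhoPlus u w with hb
        have hac : a * rhoPlus u x / ‖u‖ ^ 2 = c := by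
          rw [ha]; field_simp
        have hbd : b * rhoPlus u w / ‖u‖ ^ 2 = d := by
          rw [hb]; field_simp
        have habcd : (a * rhoPlus u x + b * rhoPlus u w) / ‖u‖ ^ 2 = c + d := by
          rw [add_div, hac, hbd]
        have h1 := hE1 a b
        have h2 := hredE a b
        rw [habcd] at h2
        rw [← h2, h1, hE2 a, hE3 b, hac, hbd]
      intro r s
      rw [hE2 (r + s), hE2 r, hE2 s,
        show (r + s) * rhoPlus u x / ‖u‖ ^ 2
          = r * rhoPlus u x / ‖u‖ ^ 2 + s * rhoPlus u x / ‖u‖ ^ 2 by ring,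
        hE4]

end Main

end RhoAux
theorem rhoStar_orthogonally_additive_iff {X : Type*} [NormedAddCommGroup X]
    [NormedSpace ℝ X] (hdim : 2 ≤ Module.rank ℝ X)
    {G : Type*} [AddCommGroup G] (f : X → G) :
    (∀ x y : X, rhoStar x y = 0 → f (x + y) = f x + f y) ↔
    ∃ (A : X → G) (B : X → X → G),
      (∀ x y : X, A (x + y) = A x + A y) ∧
      (∀ x y z : X, B (x + y) z = B x z + B y z) ∧
      (∀ x y z : X, B x (y + z) = B x y + B x z) ∧
      (∀ x y : X, B x y = B y x) ∧
      (∀ x : X, f x = A x + B x x) ∧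
      (∀ x y : X, rhoStar x y = 0 → B x y = 0) := by
  constructor
  · intro hf
    have hD2 : ∀ x y z : X, RhoAux.Df f x (y + z) = RhoAux.Df f x y + RhoAux.Df f x z :=
      fun x => RhoAux.D_add_right hf hdim x
    have hDsymm : ∀ x y : X, RhoAux.Df f x y = RhoAux.Df f y x := fun x y =>
      RhoAux.Df_symm x y
    have hD1 : ∀ x y z : X, RhoAux.Df f (x + y) z = RhoAux.Df f x z + RhoAux.Df f y z := by
      intro x y z
      rw [hDsymm, hD2, hDsymm z x, hDsymm z y]
    set B : X → X → G := fun x y => RhoAux.Df f ((2⁻¹ : ℝ) • x) y with hBdef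
    have hB1 : ∀ x y z : X, B (x + y) z = B x z + B y z := by
      intro x y z
      rw [hBdef]
      simp only
      rw [smul_add, hD1]
    have hB2 : ∀ x y z : X, B x (y + z) = B x y + B x z := by
      intro x y z
      rw [hBdef]
      simp only
      rw [hD2]
    have hhalf : ∀ y : X, (2⁻¹ : ℝ) • y + (2⁻¹ : ℝ) • y = y := by
      intro y; module
    have hDdouble : ∀ x y : X, RhoAux.Df f x y = B x y + B x y := by
      intro x y
      rw [hBdef]
      simp only
      rw [← hD1, hhalf]
    have hBsym : ∀ x y : X, B x y = B y x := by
      intro x y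
      have h1 : B x y = B x ((2⁻¹ : ℝ) • y) + B x ((2⁻¹ : ℝ) • y) := by
        conv_lhs => rw [← hhalf y]
        rw [hB2]
      have h2 : B y x = B y ((2⁻¹ : ℝ) • x) + B y ((2⁻¹ : ℝ) • x) := by
        conv_lhs => rw [← hhalf x]
        rw [hB2]
      rw [h1, h2, hBdef]
      simp only
      rw [hDsymm]
    refine ⟨fun x => f x - B x x, B, ?_, hB1, hB2, hBsym, ?_, ?_⟩
    · intro x y
      show f (x + y) - B (x + y) (x + y) = (f x - B x x) + (f y - B y y)
      have hfxy : f (x + y) = RhoAux.Df f x y + f x + f y := by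
        rw [RhoAux.Df]; abel
      rw [hfxy, hB1, hB2, hB2, hDdouble x y, hBsym y x]
      abel
    · intro x
      show f x = (f x - B x x) + B x x
      abel
    · intro x y hxy
      have h0 : rhoStar ((2⁻¹ : ℝ) • x) y = 0 := by
        rw [RhoAux.rhoStar_smul_left, hxy, mul_zero]
      have := hf _ _ h0
      rw [hBdef]
      simp only
      rw [RhoAux.Df, this]
      abel
  · rintro ⟨A, B, hA, hB1, hB2, hBsym, hfx, hB0⟩ x y hxy
    have h1 : B x y = 0 := hB0 x y hxy
    have h2 : B y x = 0 := (hBsym y x).trans h1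
    rw [hfx (x + y), hfx x, hfx y, hA, hB1, hB2, hB2, h1, h2]
    abel
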